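/- arXiv:1401.4197 — 3 statements merged into one kernel-verified Lean document; each statement's English description precedes it below -/
import Mathlib

section
/- Let T be a simple graph on a vertex set V that is connected and acyclic (a tree), let o ∈ V, and let r ∈ ℕ. If M₁ and M₂ are perfect matchings of T that agree on every edge of T having at least one endpoint at graph distance greater than r+1 from o, then M₁ and M₂ agree on every edge of T having at least one endpoint at graph distance greater than r from o. -/
/-- A perfect matching of a simple graph, viewed as a set of edges: a subset of the
edge set such that every vertex is incident to exactly one edge of the set. -/
def IsPerfectMatchingEdgeSet {V : Type*} (T : SimpleGraph V) (M : Set (Sym2 V)) : Prop :=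
  M ⊆ T.edgeSet ∧ ∀ v : V, ∃! e : Sym2 V, e ∈ M ∧ v ∈ e

/-- In a connected acyclic graph, two neighbors of `x` which are both at distance at most
`dist o x` from `o` must coincide (they are the parent of `x` towards `o`). -/
lemma close_nbrs_eq {V : Type*} {G : SimpleGraph V} (hc : G.Connected) (ha : G.IsAcyclic)
    {o x u w : V} (hxu : G.Adj x u) (hxw : G.Adj x w)
    (hx : 0 < G.dist o x) (hu : G.dist o u ≤ G.dist o x) (hw : G.dist o w ≤ G.dist o x) :
    u = w := by
  obtain ⟨P, hP, hPl⟩ := hc.exists_path_of_dist x o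
  have key : ∀ z : V, G.Adj x z → G.dist o z ≤ G.dist o x → z = P.getVert 1 := by
    classical
    intro z hz hd
    obtain ⟨Q, hQ, hQl⟩ := hc.exists_path_of_dist z o
    have hxQ : x ∉ Q.support := by
      intro hmem
      have h1 : (Q.takeUntil x hmem).length ≠ 0 := fun h0 =>
        hz.ne (SimpleGraph.Walk.eq_of_length_eq_zero h0).symm
      have hsplit : (Q.takeUntil x hmem).length + (Q.dropUntil x hmem).length = Q.length := by
        rw [← SimpleGraph.Walk.length_append, SimpleGraph.Walk.take_spec]
      have hdrop : G.dist x o ≤ (Q.dropUntil x hmem).length :=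
        SimpleGraph.dist_le _
      have hxo : G.dist x o = G.dist o x := SimpleGraph.dist_comm
      have hzo : G.dist z o = G.dist o z := SimpleGraph.dist_comm
      omega
    have hpath : (SimpleGraph.Walk.cons hz Q).IsPath := hQ.cons hxQ
    have := ha.path_unique ⟨SimpleGraph.Walk.cons hz Q, hpath⟩ ⟨P, hP⟩
    have hval : (SimpleGraph.Walk.cons hz Q) = P := congrArg Subtype.val this
    calc z = (SimpleGraph.Walk.cons hz Q).getVert 1 := by
              simp [SimpleGraph.Walk.getVert_cons_succ]
      _ = P.getVert 1 := by rw [hval]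
  rw [key u hxu hu, key w hxw hw]

/-- If two perfect matchings of a tree agree on every edge having at least one endpoint
at distance greater than `r+1` from `o`, then they agree on every edge having at least
one endpoint at distance greater than `r` from `o`. -/
theorem perfectMatching_agree_step {V : Type*} (T : SimpleGraph V)
    (hconn : T.Connected) (hacyc : T.IsAcyclic) (o : V) (r : ℕ)
    (M₁ M₂ : Set (Sym2 V))
    (hM₁ : IsPerfectMatchingEdgeSet T M₁) (hM₂ : IsPerfectMatchingEdgeSet T M₂)
    (hagree : ∀ e ∈ T.edgeSet, (∃ x ∈ e, r + 1 < T.dist o x) → (e ∈ M₁ ↔ e ∈ M₂)) :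
    ∀ e ∈ T.edgeSet, (∃ x ∈ e, r < T.dist o x) → (e ∈ M₁ ↔ e ∈ M₂) := by
  intro e he hex
  by_cases hfar : ∃ y ∈ e, r + 1 < T.dist o y
  · exact hagree e he hfar
  push_neg at hfar
  obtain ⟨x, hxe, hx⟩ := hex
  have hxd : T.dist o x = r + 1 := le_antisymm (hfar x hxe) hx
  -- the other endpoint of `e`
  set u := Sym2.Mem.other hxe with hu_def
  have hspec : s(x, u) = e := Sym2.other_spec hxe
  have hue : u ∈ e := Sym2.other_mem hxe
  have hadjxu : T.Adj x u := by rw [← hspec] at he; exact he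
  have hud : T.dist o u ≤ r + 1 := hfar u hue
  have key : ∀ M M' : Set (Sym2 V), IsPerfectMatchingEdgeSet T M →
      IsPerfectMatchingEdgeSet T M' →
      (∀ e' ∈ T.edgeSet, (∃ y ∈ e', r + 1 < T.dist o y) → (e' ∈ M ↔ e' ∈ M')) →
      e ∈ M → e ∈ M' := by
    intro M M' hM hM' hag heM
    obtain ⟨e₂, ⟨he₂M', hxe₂⟩, _⟩ := hM'.2 x
    rcases eq_or_ne e₂ e with h | h
    · exact h ▸ he₂M'
    exfalso
    set w := Sym2.Mem.other hxe₂ with hw_def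
    have hspec₂ : s(x, w) = e₂ := Sym2.other_spec hxe₂
    have hwe₂ : w ∈ e₂ := Sym2.other_mem hxe₂
    have he₂edge : e₂ ∈ T.edgeSet := hM'.1 he₂M'
    have hadjxw : T.Adj x w := by rw [← hspec₂] at he₂edge; exact he₂edge
    have hwfar : r + 1 < T.dist o w := by
      by_contra hle
      push_neg at hle
      have huw : u = w := close_nbrs_eq hconn hacyc hadjxu hadjxw
        (by rw [hxd]; omega) (by rw [hxd]; omega) (by rw [hxd]; omega)
      exact h (by rw [← hspec₂, ← huw, hspec])
    have he₂M : e₂ ∈ M := (hag e₂ (hM'.1 he₂M') ⟨w, hwe₂, hwfar⟩).mpr he₂M'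
    obtain ⟨e₁, -, huniqM⟩ := hM.2 x
    have h1 : e = e₁ := huniqM e ⟨heM, hxe⟩
    have h2 : e₂ = e₁ := huniqM e₂ ⟨he₂M, hxe₂⟩
    exact h (h2.trans h1.symm)
  exact ⟨key M₁ M₂ hM₁ hM₂ hagree,
    key M₂ M₁ hM₂ hM₁ (fun e' he' hy => (hagree e' he' hy).symm)⟩
end

section
/- Let T be a simple graph on a vertex set V that is connected and acyclic (a tree), let o ∈ V, and let r ∈ ℕ. If M₁ and M₂ are perfect matchings of T that agree on every edge of T having at least one endpoint at graph distance greater than r from o, then M₁ = M₂. -/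
/-- In a tree, a vertex has at most one neighbor at distance not exceeding its own
distance from `o`. -/
lemma tree_parent_unique {V : Type*} {T : SimpleGraph V}
    (hconn : T.Connected) (hacyc : T.IsAcyclic) {o x u w : V}
    (hu : T.Adj x u) (hw : T.Adj x w)
    (hdu : T.dist o u ≤ T.dist o x) (hdw : T.dist o w ≤ T.dist o x) : u = w := by
  have key : ∀ y : V, T.Adj x y → T.dist o y ≤ T.dist o x →
      ∃ q : T.Walk x o, q.IsPath ∧ q.getVert 1 = y := by
    intro y hy hdy
    classical
    obtain ⟨p, hp, hlen⟩ := hconn.exists_path_of_dist y o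
    have hxp : x ∉ p.support := by
      intro hx
      have h1 : T.dist o x ≤ (p.dropUntil x hx).length := by
        have := SimpleGraph.dist_le (p.dropUntil x hx)
        rwa [SimpleGraph.dist_comm] at this
      have h2 : (p.takeUntil x hx).length + (p.dropUntil x hx).length = p.length := by
        rw [← SimpleGraph.Walk.length_append, p.take_spec hx]
      have h3 : p.length ≤ T.dist o x := by
        rw [hlen, SimpleGraph.dist_comm]; exact hdy
      have h4 : (p.takeUntil x hx).length = 0 := by omega
      have := SimpleGraph.Walk.eq_of_length_eq_zero h4
      exact hy.ne' this
    exact ⟨SimpleGraph.Walk.cons hy p, hp.cons hxp,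
      (SimpleGraph.Walk.getVert_cons_succ (n := 0) p hy).trans p.getVert_zero⟩
  obtain ⟨qu, hqu, hqu1⟩ := key u hu hdu
  obtain ⟨qw, hqw, hqw1⟩ := key w hw hdw
  have : (⟨qu, hqu⟩ : T.Path x o) = ⟨qw, hqw⟩ :=
    SimpleGraph.isAcyclic_iff_path_unique.mp hacyc _ _
  have hq : qu = qw := congrArg Subtype.val this
  rw [← hqu1, ← hqw1, hq]

/-- Auxiliary step: one inclusion of the agreement propagation. -/
lemma step_aux {V : Type*} {T : SimpleGraph V}
    (hconn : T.Connected) (hacyc : T.IsAcyclic) {o : V} {r : ℕ}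
    {M₁ M₂ : Set (Sym2 V)}
    (hM₁ : IsPerfectMatchingEdgeSet T M₁) (hM₂ : IsPerfectMatchingEdgeSet T M₂)
    {x u : V} (hxu : T.Adj x u) (hdx : T.dist o x = r + 1) (hdu : T.dist o u ≤ r + 1)
    (hagree : ∀ f ∈ T.edgeSet, (∃ y ∈ f, r + 1 < T.dist o y) → (f ∈ M₁ ↔ f ∈ M₂))
    (he : s(x, u) ∈ M₁) : s(x, u) ∈ M₂ := by
  obtain ⟨f, ⟨hf2, hxf⟩, _⟩ := hM₂.2 x
  by_cases hfe : f = s(x, u)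
  · rwa [← hfe]
  · exfalso
    obtain ⟨w, rfl⟩ := Sym2.mem_iff_exists.mp hxf
    have hxw : T.Adj x w := hM₂.1 hf2
    have hwu : w ≠ u := fun h => hfe (by rw [h])
    have hdw : r + 1 < T.dist o w := by
      by_contra hle
      push_neg at hle
      exact hwu (tree_parent_unique hconn hacyc hxw hxu (hdx ▸ hle) (hdx ▸ hdu))
    have hf1 : s(x, w) ∈ M₁ :=
      (hagree _ (hM₂.1 hf2) ⟨w, Sym2.mem_mk_right x w, hdw⟩).mpr hf2
    obtain ⟨g, _, hgu⟩ := hM₁.2 x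
    have h1 : s(x, u) = g := hgu _ ⟨he, Sym2.mem_mk_left x u⟩
    have h2 : s(x, w) = g := hgu _ ⟨hf1, Sym2.mem_mk_left x w⟩
    exact hfe (by rw [h1, ← h2])

/-- If two perfect matchings of a tree agree on every edge having at least one endpoint
at distance greater than `r` from `o`, then they are equal. -/
theorem perfectMatching_eq_of_agree_outside_ball {V : Type*} (T : SimpleGraph V)
    (hconn : T.Connected) (hacyc : T.IsAcyclic) (o : V) (r : ℕ)
    (M₁ M₂ : Set (Sym2 V))
    (hM₁ : IsPerfectMatchingEdgeSet T M₁) (hM₂ : IsPerfectMatchingEdgeSet T M₂)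
    (hagree : ∀ e ∈ T.edgeSet, (∃ x ∈ e, r < T.dist o x) → (e ∈ M₁ ↔ e ∈ M₂)) :
    M₁ = M₂ := by
  induction r with
  | zero =>
    ext e
    have key : e ∈ T.edgeSet → (∃ x ∈ e, 0 < T.dist o x) := by
      induction e with
      | h a b =>
        intro he
        have hab : T.Adj a b := he
        by_cases ha : a = o
        · refine ⟨b, Sym2.mem_mk_right a b, hconn.pos_dist_of_ne ?_⟩
          rintro rfl; exact hab.ne' ha.symm
        · exact ⟨a, Sym2.mem_mk_left a b, hconn.pos_dist_of_ne (Ne.symm ha)⟩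
    constructor
    · intro h1; exact (hagree e (hM₁.1 h1) (key (hM₁.1 h1))).mp h1
    · intro h2; exact (hagree e (hM₂.1 h2) (key (hM₂.1 h2))).mpr h2
  | succ r ih =>
    apply ih
    intro e he hex
    by_cases hbig : ∃ y ∈ e, r + 1 < T.dist o y
    · exact hagree e he hbig
    · push_neg at hbig
      obtain ⟨x, hxe, hxd⟩ := hex
      have hdx : T.dist o x = r + 1 := le_antisymm (hbig x hxe) hxd
      obtain ⟨u, rfl⟩ := Sym2.mem_iff_exists.mp hxe
      have hxu : T.Adj x u := he
      have hdu : T.dist o u ≤ r + 1 := hbig u (Sym2.mem_mk_right x u)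
      constructor
      · exact step_aux hconn hacyc hM₁ hM₂ hxu hdx hdu hagree
      · exact step_aux hconn hacyc hM₂ hM₁ hxu hdx hdu
          (fun f hf hy => (hagree f hf hy).symm)
end

section
/- Let d ≥ 3 be a natural number, let T be a simple graph on a vertex set V that is connected, acyclic, and d-regular (the d-regular tree), let o ∈ V, let n ≥ 1, and let x ∈ V with dist(o,x) = n. Then for every real θ, the (finite) sum over all y with dist(o,y) = n of θ^{dist(x,y)} equals 1 + Σ_{k=1}^{n−1} (d−2)·(d−1)^{k−1}·θ^{2k} + (d−1)^n·θ^{2n}. -/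
open SimpleGraph Set

namespace SphereSumAux

variable {V : Type*} {T : SimpleGraph V}

lemma dist_add_dist_le_of_mem_support {u y z : V} (w : T.Walk u y) (hz : z ∈ w.support) :
    T.dist u z + T.dist z y ≤ w.length := by
  classical
  have h : ((w.takeUntil z hz).append (w.dropUntil z hz)).length = w.length := by
    rw [w.take_spec hz]
  rw [SimpleGraph.Walk.length_append] at h
  exact h ▸ add_le_add (SimpleGraph.dist_le _) (SimpleGraph.dist_le _)

lemma dist_ne_of_adj (hconn : T.Connected) (hacyc : T.IsAcyclic) {u v y : V}
    (huv : T.Adj u v) : T.dist u y ≠ T.dist v y := by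
  classical
  intro h
  obtain ⟨p, hp⟩ := hconn.exists_walk_length_eq_dist u y
  obtain ⟨q, hq⟩ := hconn.exists_walk_length_eq_dist v y
  have hp' : p.bypass.length = T.dist u y :=
    le_antisymm (hp ▸ p.length_bypass_le) (SimpleGraph.dist_le _)
  have hq' : q.bypass.length = T.dist v y :=
    le_antisymm (hq ▸ q.length_bypass_le) (SimpleGraph.dist_le _)
  have hu : u ∉ q.bypass.support := by
    intro hu
    have := dist_add_dist_le_of_mem_support q.bypass hu
    rw [hq'] at this
    have h1 : T.dist v u = 1 := SimpleGraph.dist_eq_one_iff_adj.mpr huv.symm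
    omega
  have hpath : (SimpleGraph.Walk.cons huv q.bypass).IsPath :=
    (q.bypass_isPath).cons hu
  have := SimpleGraph.isAcyclic_iff_path_unique.mp hacyc
    ⟨p.bypass, p.bypass_isPath⟩ ⟨SimpleGraph.Walk.cons huv q.bypass, hpath⟩
  have hlen := congrArg (fun r : T.Path u y => r.1.length) this
  simp only [SimpleGraph.Walk.length_cons] at hlen
  rw [hp', hq', h] at hlen
  omega

lemma dist_adj_cases (hconn : T.Connected) (hacyc : T.IsAcyclic) {u v y : V}
    (huv : T.Adj u v) : T.dist v y = T.dist u y + 1 ∨ T.dist u y = T.dist v y + 1 := by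
  have h1 : T.dist u y ≤ T.dist u v + T.dist v y := hconn.dist_triangle
  have h2 : T.dist v y ≤ T.dist v u + T.dist u y := hconn.dist_triangle
  have h3 : T.dist u v = 1 := SimpleGraph.dist_eq_one_iff_adj.mpr huv
  have h4 : T.dist v u = 1 := SimpleGraph.dist_eq_one_iff_adj.mpr huv.symm
  have h5 := dist_ne_of_adj hconn hacyc huv (y := y)
  omega

lemma closer_unique (hconn : T.Connected) (hacyc : T.IsAcyclic) {u y w1 w2 : V}
    (h1 : T.Adj u w1) (h2 : T.Adj u w2)
    (hd1 : T.dist w1 y + 1 = T.dist u y) (hd2 : T.dist w2 y + 1 = T.dist u y) :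
    w1 = w2 := by
  classical
  obtain ⟨p1, hp1⟩ := hconn.exists_walk_length_eq_dist w1 y
  obtain ⟨p2, hp2⟩ := hconn.exists_walk_length_eq_dist w2 y
  have hp1' : p1.bypass.length = T.dist w1 y :=
    le_antisymm (hp1 ▸ p1.length_bypass_le) (SimpleGraph.dist_le _)
  have hp2' : p2.bypass.length = T.dist w2 y :=
    le_antisymm (hp2 ▸ p2.length_bypass_le) (SimpleGraph.dist_le _)
  have hu1 : u ∉ p1.bypass.support := by
    intro hu
    have := dist_add_dist_le_of_mem_support p1.bypass hu
    have h1' : T.dist w1 u = 1 := SimpleGraph.dist_eq_one_iff_adj.mpr h1.symm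
    omega
  have hu2 : u ∉ p2.bypass.support := by
    intro hu
    have := dist_add_dist_le_of_mem_support p2.bypass hu
    have h2' : T.dist w2 u = 1 := SimpleGraph.dist_eq_one_iff_adj.mpr h2.symm
    omega
  have heq := SimpleGraph.isAcyclic_iff_path_unique.mp hacyc
    ⟨SimpleGraph.Walk.cons h1 p1.bypass, (p1.bypass_isPath).cons hu1⟩
    ⟨SimpleGraph.Walk.cons h2 p2.bypass, (p2.bypass_isPath).cons hu2⟩
  have := congrArg (fun r : T.Path u y => r.1.getVert 1) heq
  simpa [SimpleGraph.Walk.getVert_cons_succ, SimpleGraph.Walk.getVert_zero] using this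

lemma exists_closer (hconn : T.Connected) {u y : V} {k : ℕ} (h : T.dist u y = k + 1) :
    ∃ w, T.Adj u w ∧ T.dist w y = k := by
  obtain ⟨p, hp⟩ := hconn.exists_walk_length_eq_dist u y
  cases p with
  | nil => rw [h] at hp; simp at hp
  | @cons _ w _ hadj q =>
    refine ⟨w, hadj, le_antisymm ?_ ?_⟩
    · have := SimpleGraph.dist_le q
      rw [h] at hp
      simp only [SimpleGraph.Walk.length_cons] at hp
      omega
    · have h1 : T.dist u y ≤ T.dist u w + T.dist w y := hconn.dist_triangle
      have h3 : T.dist u w = 1 := SimpleGraph.dist_eq_one_iff_adj.mpr hadj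
      omega

lemma gate (hconn : T.Connected) (hacyc : T.IsAcyclic) :
    ∀ k : ℕ, ∀ u w v y : V, T.Adj u w →
    T.dist v w = T.dist v u + 1 → T.dist u y = k + 1 → T.dist w y = k →
    T.dist v y = T.dist v u + (k + 1) := by
  intro k
  induction k with
  | zero =>
    intro u w v y _ hvw _ hwy
    have : y = w := ((hconn.dist_eq_zero_iff).mp hwy).symm
    rw [this, hvw]
  | succ k ih =>
    intro u w v y huw hvw huy hwy
    obtain ⟨w', hww', hw'y⟩ := exists_closer hconn hwy
    have hw'u : w' ≠ u := by
      intro h; rw [h] at hw'y; omega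
    have hcases := dist_adj_cases hconn hacyc hww' (y := v)
    rcases hcases with hc | hc
    · -- dist v w' = dist v w + 1 : good, recurse
      rw [SimpleGraph.dist_comm (u := w') (v := v), SimpleGraph.dist_comm (u := w) (v := v)] at hc
      have := ih w w' v y hww' hc hwy hw'y
      rw [this, hvw]; ring
    · -- dist v w = dist v w' + 1 : w' and u both closer to v, contradiction
      have hvw2 : T.dist w v = T.dist u v + 1 := by
        rw [SimpleGraph.dist_comm (u := w) (v := v), SimpleGraph.dist_comm (u := u) (v := v)]
        exact hvw
      have hweq : u = w' := by
        apply closer_unique hconn hacyc (u := w) (y := v) huw.symm hww'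
        · omega
        · omega
      exact absurd hweq.symm hw'u


lemma finsum_mem_const' {α M : Type*} [AddCommMonoid M] (s : Set α) (hs : s.Finite) (c : M) :
    ∑ᶠ i ∈ s, c = s.ncard • c := by
  classical
  rw [finsum_mem_eq_finite_toFinset_sum _ hs, Finset.sum_const,
    Set.ncard_eq_toFinset_card _ hs]

lemma finsum_mem_biUnion_eq {ι α : Type*} (s : Set ι) (hs : s.Finite) (t : ι → Set α)
    (f : α → ℝ) (ht : ∀ i ∈ s, (t i).Finite)
    (hdisj : ∀ i ∈ s, ∀ j ∈ s, i ≠ j → Disjoint (t i) (t j)) :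
    ∑ᶠ y ∈ ⋃ i ∈ s, t i, f y = ∑ᶠ i ∈ s, ∑ᶠ y ∈ t i, f y := by
  classical
  revert ht hdisj
  refine Set.Finite.induction_on s hs ?_ ?_
  · intro _ _; simp
  · intro a s ha hsf ih ht hdisj
    rw [Set.biUnion_insert, finsum_mem_union, finsum_mem_insert _ ha hsf,
      ih (fun i hi => ht i (Set.mem_insert_of_mem a hi))
        (fun i hi j hj hij => hdisj i (Set.mem_insert_of_mem a hi) j
          (Set.mem_insert_of_mem a hj) hij)]
    · rw [Set.disjoint_iUnion₂_right]
      intro i hi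
      exact hdisj a (Set.mem_insert a s) i (Set.mem_insert_of_mem a hi)
        (fun h => ha (h ▸ hi))
    · exact ht a (Set.mem_insert a s)
    · exact Set.Finite.biUnion hsf (fun i hi => ht i (Set.mem_insert_of_mem a hi))

lemma ncard_biUnion_eq {ι α : Type*} (s : Set ι) (hs : s.Finite) (t : ι → Set α)
    (ht : ∀ i ∈ s, (t i).Finite)
    (hdisj : ∀ i ∈ s, ∀ j ∈ s, i ≠ j → Disjoint (t i) (t j)) :
    (⋃ i ∈ s, t i).ncard = ∑ᶠ i ∈ s, (t i).ncard := by
  classical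
  revert ht hdisj
  refine Set.Finite.induction_on s hs ?_ ?_
  · intro _ _; simp
  · intro a s ha hsf ih ht hdisj
    have hdisj' : Disjoint (t a) (⋃ i ∈ s, t i) := by
      rw [Set.disjoint_iUnion₂_right]
      intro i hi
      exact hdisj a (Set.mem_insert a s) i (Set.mem_insert_of_mem a hi)
        (fun h => ha (h ▸ hi))
    rw [Set.biUnion_insert,
      Set.ncard_union_eq hdisj' (ht a (Set.mem_insert a s))
        (Set.Finite.biUnion hsf (fun i hi => ht i (Set.mem_insert_of_mem a hi))),
      finsum_mem_insert _ ha hsf,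
      ih (fun i hi => ht i (Set.mem_insert_of_mem a hi))
        (fun i hi j hj hij => hdisj i (Set.mem_insert_of_mem a hi) j
          (Set.mem_insert_of_mem a hj) hij)]

/-- The set of vertices at distance `k+1` from `u` and `k` from `w`. -/
def Bs (T : SimpleGraph V) (u w : V) (k : ℕ) : Set V :=
  {y | T.dist u y = k + 1 ∧ T.dist w y = k}

lemma neighborSet_finite {d : ℕ} (hd : 3 ≤ d)
    (hreg : ∀ v : V, (T.neighborSet v).ncard = d) (v : V) :
    (T.neighborSet v).Finite := by
  rcases Set.finite_or_infinite (T.neighborSet v) with h | h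
  · exact h
  · have := h.ncard
    rw [hreg] at this
    omega

lemma Bs_card (hconn : T.Connected) (hacyc : T.IsAcyclic) {d : ℕ} (hd : 3 ≤ d)
    (hreg : ∀ v : V, (T.neighborSet v).ncard = d) :
    ∀ (k : ℕ) (u w : V), T.Adj u w →
      (Bs T u w k).Finite ∧ (Bs T u w k).ncard = (d - 1) ^ k := by
  intro k
  induction k with
  | zero =>
    intro u w huw
    have h : Bs T u w 0 = {w} := by
      ext y
      simp only [Bs, Set.mem_setOf_eq, Set.mem_singleton_iff]
      constructor
      · rintro ⟨-, h2⟩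
        exact ((hconn.dist_eq_zero_iff).mp h2).symm
      · rintro rfl
        exact ⟨SimpleGraph.dist_eq_one_iff_adj.mpr huw, SimpleGraph.dist_self⟩
    rw [h]
    simp
  | succ k ih =>
    intro u w huw
    have hdecomp : Bs T u w (k + 1) = ⋃ w' ∈ (T.neighborSet w \ {u}), Bs T w w' k := by
      ext y
      simp only [Bs, Set.mem_setOf_eq, Set.mem_iUnion, Set.mem_diff,
        SimpleGraph.mem_neighborSet, Set.mem_singleton_iff, exists_prop]
      constructor
      · rintro ⟨h1, h2⟩
        obtain ⟨w', hww', hw'y⟩ := exists_closer hconn h2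
        refine ⟨w', ⟨hww', ?_⟩, h2, hw'y⟩
        intro h; rw [h] at hw'y; omega
      · rintro ⟨w', ⟨hww', hw'u⟩, h1, h2⟩
        refine ⟨?_, h1⟩
        rcases dist_adj_cases hconn hacyc huw (y := y) with hc | hc
        · exfalso
          apply hw'u
          apply closer_unique hconn hacyc (u := w) (y := y) hww' huw.symm <;> omega
        · omega
    have hWfin : (T.neighborSet w \ {u}).Finite :=
      (neighborSet_finite hd hreg w).subset Set.diff_subset
    have hWcard : (T.neighborSet w \ {u}).ncard = d - 1 := by
      have h1 : ({u} : Set V) ⊆ T.neighborSet w := Set.singleton_subset_iff.mpr huw.symm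
      rw [Set.ncard_diff h1 (Set.finite_singleton u), hreg, Set.ncard_singleton]
    have hdisj : ∀ w1 ∈ T.neighborSet w \ {u}, ∀ w2 ∈ T.neighborSet w \ {u},
        w1 ≠ w2 → Disjoint (Bs T w w1 k) (Bs T w w2 k) := by
      intro w1 hw1 w2 hw2 h12
      rw [Set.disjoint_left]
      rintro y ⟨hy1, hy2⟩ ⟨hz1, hz2⟩
      exact h12 (closer_unique hconn hacyc (u := w) (y := y) hw1.1 hw2.1
        (by omega) (by omega))
    have hfin : (Bs T u w (k + 1)).Finite := by
      rw [hdecomp]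
      exact Set.Finite.biUnion hWfin (fun i hi => (ih w i hi.1).1)
    refine ⟨hfin, ?_⟩
    rw [hdecomp, ncard_biUnion_eq _ hWfin _ (fun i hi => (ih w i hi.1).1) hdisj,
      finsum_mem_congr rfl (fun i hi => (ih w i hi.1).2),
      finsum_mem_const' _ hWfin, hWcard, smul_eq_mul, pow_succ, mul_comm]


lemma dist_getVert_le (hconn : T.Connected) {a b : V} (p : T.Walk a b) (m : ℕ) :
    T.dist a (p.getVert m) ≤ m := by
  induction m with
  | zero => simp
  | succ m ih =>
    by_cases h : m < p.length
    · have hadj := p.adj_getVert_succ h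
      have h1 : T.dist a (p.getVert (m + 1)) ≤
          T.dist a (p.getVert m) + T.dist (p.getVert m) (p.getVert (m + 1)) :=
        hconn.dist_triangle
      have h2 : T.dist (p.getVert m) (p.getVert (m + 1)) = 1 :=
        SimpleGraph.dist_eq_one_iff_adj.mpr hadj
      omega
    · have hle : p.length ≤ m := by omega
      rw [p.getVert_of_length_le (by omega : p.length ≤ m + 1)]
      rw [p.getVert_of_length_le hle] at ih
      omega

end SphereSumAux

/-- In the `d`-regular tree (`d ≥ 3`), for `x` on the sphere of radius `n ≥ 1` about `o`
and any real `θ`, the sum over the sphere `{y : dist o y = n}` of `θ^{dist x y}` equals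
`1 + ∑_{k=1}^{n-1} (d-2)(d-1)^{k-1} θ^{2k} + (d-1)^n θ^{2n}`. -/
theorem sphere_sum_theta_pow_dist {V : Type*} (d : ℕ) (hd : 3 ≤ d)
    (T : SimpleGraph V) (hconn : T.Connected) (hacyc : T.IsAcyclic)
    (hreg : ∀ v : V, (T.neighborSet v).ncard = d)
    (o : V) (n : ℕ) (hn : 1 ≤ n) (x : V) (hx : T.dist o x = n) (θ : ℝ) :
    ∑ᶠ y ∈ {y : V | T.dist o y = n}, θ ^ (T.dist x y)
      = 1 + (∑ k ∈ Finset.Icc 1 (n - 1),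
            ((d : ℝ) - 2) * ((d : ℝ) - 1) ^ (k - 1) * θ ^ (2 * k))
        + ((d : ℝ) - 1) ^ n * θ ^ (2 * n) := by
  classical
  open SphereSumAux in
  obtain ⟨p, hp⟩ := hconn.exists_walk_length_eq_dist o x
  rw [hx] at hp
  set g : ℕ → V := fun m => p.getVert m with hg
  have hg0 : g 0 = o := p.getVert_zero
  have hgn : g n = x := by rw [hg]; simp only []; rw [← hp]; exact p.getVert_length
  have hdist : ∀ m ≤ n, T.dist o (g m) = m ∧ T.dist (g m) x = n - m := by
    intro m hm
    have h1 : T.dist o (g m) ≤ m := SphereSumAux.dist_getVert_le hconn p m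
    have h2 : T.dist (g m) x ≤ n - m := by
      have h := SphereSumAux.dist_getVert_le hconn p.reverse (n - m)
      rw [SimpleGraph.Walk.getVert_reverse, hp] at h
      have hmm : n - (n - m) = m := by omega
      rw [hmm] at h
      rw [SimpleGraph.dist_comm (u := g m) (v := x)]
      exact h
    have h3 : (n : ℕ) ≤ T.dist o (g m) + T.dist (g m) x := by
      have h4 : T.dist o x ≤ T.dist o (g m) + T.dist (g m) x := hconn.dist_triangle
      omega
    omega
  have hadjg : ∀ m, m < n → T.Adj (g m) (g (m + 1)) := by
    intro m hm
    exact p.adj_getVert_succ (by omega)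
  set W : ℕ → Set V := fun m =>
    T.neighborSet (g m) \ {z | z = g (m + 1) ∨ (1 ≤ m ∧ z = g (m - 1))} with hW
  set C : ℕ → Set V := fun m => ⋃ w ∈ W m, SphereSumAux.Bs T (g m) w (n - m - 1) with hC
  -- key property of pieces
  have hkey : ∀ m, m < n → ∀ w ∈ W m, ∀ y ∈ SphereSumAux.Bs T (g m) w (n - m - 1),
      T.dist o y = n ∧ T.dist x y = 2 * (n - m) := by
    intro m hm w hw y hy
    obtain ⟨hy1, hy2⟩ := hy
    obtain ⟨hwadj, hwne⟩ := hw
    simp only [Set.mem_setOf_eq, not_or, not_and] at hwne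
    obtain ⟨hwne1, hwne2⟩ := hwne
    have hdom : T.dist o (g m) = m := (hdist m hm.le).1
    have hdxm : T.dist (g m) x = n - m := (hdist m hm.le).2
    have hdom' : T.dist (g m) o = m := by rw [SimpleGraph.dist_comm]; exact hdom
    have hdxm' : T.dist x (g m) = n - m := by rw [SimpleGraph.dist_comm]; exact hdxm
    have hwadj' : T.Adj (g m) w := hwadj
    -- dist o w = m + 1
    have hdow : T.dist o w = m + 1 := by
      rcases SphereSumAux.dist_adj_cases hconn hacyc hwadj' (y := o) with hc | hc
      · rw [SimpleGraph.dist_comm (u := o) (v := w)]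
        omega
      · exfalso
        rcases Nat.eq_zero_or_pos m with hm0 | hm1
        · rw [hm0] at hdom'
          rw [hm0, hg0] at hc
          simp [SimpleGraph.dist_self] at hc
        · have hadjm : T.Adj (g m) (g (m - 1)) := by
            have h := hadjg (m - 1) (by omega)
            have hmm : m - 1 + 1 = m := by omega
            rw [hmm] at h
            exact h.symm
          have hdo1 : T.dist (g (m - 1)) o = m - 1 := by
            rw [SimpleGraph.dist_comm]; exact (hdist (m - 1) (by omega)).1
          have heq : w = g (m - 1) := by
            apply SphereSumAux.closer_unique hconn hacyc (u := g m) (y := o) hwadj' hadjm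
            · omega
            · omega
          exact hwne2 hm1 heq
    have hdow' : T.dist w o = m + 1 := by rw [SimpleGraph.dist_comm]; exact hdow
    -- dist x w = (n - m) + 1
    have hdxw : T.dist x w = (n - m) + 1 := by
      rcases SphereSumAux.dist_adj_cases hconn hacyc hwadj' (y := x) with hc | hc
      · rw [SimpleGraph.dist_comm (u := x) (v := w)]
        omega
      · exfalso
        apply hwne1
        have hdx1 : T.dist (g (m + 1)) x = n - (m + 1) := (hdist (m + 1) (by omega)).2
        apply SphereSumAux.closer_unique hconn hacyc (u := g m) (y := x) hwadj' (hadjg m hm)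
        · omega
        · omega
    constructor
    · have hres := SphereSumAux.gate hconn hacyc (n - m - 1) (g m) w o y hwadj'
        (by omega) hy1 hy2
      omega
    · have hres := SphereSumAux.gate hconn hacyc (n - m - 1) (g m) w x y hwadj'
        (by omega) hy1 hy2
      omega
  -- decomposition of the sphere
  have hDecomp : {y : V | T.dist o y = n} = insert x (⋃ m ∈ Set.Iio n, C m) := by
    ext y
    simp only [Set.mem_setOf_eq, Set.mem_insert_iff, Set.mem_iUnion, Set.mem_Iio, exists_prop]
    constructor
    · intro hy
      by_cases hyx : y = x
      · exact Or.inl hyx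
      · right
        set P : ℕ → Prop := fun m => T.dist (g m) y = n - m with hP
        have hP0 : P 0 := by show T.dist (g 0) y = n - 0; rw [hg0]; omega
        set m := Nat.findGreatest P n with hm
        have hPm : P m := Nat.findGreatest_spec (Nat.zero_le n) hP0
        have hmn : m ≤ n := Nat.findGreatest_le n
        have hmlt : m < n := by
          rcases Nat.lt_or_ge m n with h | h
          · exact h
          · exfalso
            have hmn' : m = n := by omega
            have hPm' : T.dist (g m) y = n - m := hPm
            rw [hmn', hgn] at hPm'
            simp only [Nat.sub_self] at hPm'
            exact hyx ((hconn.dist_eq_zero_iff.mp hPm')).symm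
        obtain ⟨w, hwadj, hwy⟩ := SphereSumAux.exists_closer hconn
          (show T.dist (g m) y = (n - m - 1) + 1 by
            have hPm' : T.dist (g m) y = n - m := hPm
            omega)
        refine ⟨m, hmlt, ?_⟩
        have hwW : w ∈ W m := by
          constructor
          · exact hwadj
          · simp only [Set.mem_setOf_eq, not_or, not_and]
            constructor
            · intro heq
              have hnext : P (m + 1) := by
                show T.dist (g (m + 1)) y = n - (m + 1)
                rw [← heq]
                omega
              exact Nat.findGreatest_is_greatest (n := n) (k := m + 1) (by omega) (by omega) hnext
            · intro hm1 heq
              have hdo1 : T.dist o (g (m - 1)) = m - 1 := (hdist (m - 1) (by omega)).1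
              have htri : T.dist o y ≤ T.dist o (g (m - 1)) + T.dist (g (m - 1)) y :=
                hconn.dist_triangle
              rw [heq] at hwy
              omega
        refine Set.mem_biUnion hwW ?_
        constructor
        · have hPm' : T.dist (g m) y = n - m := hPm
          omega
        · exact hwy
    · rintro (rfl | ⟨m, hmlt, hy⟩)
      · exact hx
      · simp only [hC, Set.mem_iUnion, exists_prop] at hy
        obtain ⟨w, hwW, hyB⟩ := hy
        exact (hkey m hmlt w hwW y hyB).1
  -- finiteness and cardinality facts
  have hBprops := fun (m : ℕ) (w : V) (hw : T.Adj (g m) w) =>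
    SphereSumAux.Bs_card hconn hacyc hd hreg (n - m - 1) (g m) w hw
  have hWfin : ∀ m, (W m).Finite := fun m =>
    (SphereSumAux.neighborSet_finite hd hreg (g m)).subset Set.diff_subset
  have hCfin : ∀ m, (C m).Finite := fun m =>
    Set.Finite.biUnion (hWfin m) (fun w hw => (hBprops m w hw.1).1)
  -- inner double sums
  have hBdisj : ∀ m, ∀ w1 ∈ W m, ∀ w2 ∈ W m, w1 ≠ w2 →
      Disjoint (SphereSumAux.Bs T (g m) w1 (n - m - 1)) (SphereSumAux.Bs T (g m) w2 (n - m - 1)) := by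
    intro m w1 hw1 w2 hw2 h12
    rw [Set.disjoint_left]
    rintro y ⟨hy1, hy2⟩ ⟨hz1, hz2⟩
    exact h12 (SphereSumAux.closer_unique hconn hacyc (u := g m) (y := y) hw1.1 hw2.1
      (by omega) (by omega))
  have hCsum : ∀ m, m < n → ∑ᶠ y ∈ C m, θ ^ (T.dist x y)
      = ((W m).ncard : ℝ) * (((d - 1) ^ (n - m - 1) : ℕ) : ℝ) * θ ^ (2 * (n - m)) := by
    intro m hm
    rw [hC]
    simp only []
    rw [SphereSumAux.finsum_mem_biUnion_eq (W m) (hWfin m) _ _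
      (fun w hw => (hBprops m w hw.1).1) (hBdisj m)]
    have hinner : ∀ w ∈ W m, ∑ᶠ y ∈ SphereSumAux.Bs T (g m) w (n - m - 1), θ ^ (T.dist x y)
        = (((d - 1) ^ (n - m - 1) : ℕ) : ℝ) * θ ^ (2 * (n - m)) := by
      intro w hw
      have hconst : ∀ y ∈ SphereSumAux.Bs T (g m) w (n - m - 1),
          θ ^ (T.dist x y) = θ ^ (2 * (n - m)) := by
        intro y hy
        rw [(hkey m hm w hw y hy).2]
      rw [finsum_mem_congr rfl hconst,
        SphereSumAux.finsum_mem_const' _ (hBprops m w hw.1).1 _,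
        (hBprops m w hw.1).2, nsmul_eq_mul]
    rw [finsum_mem_congr rfl hinner, SphereSumAux.finsum_mem_const' _ (hWfin m) _,
      nsmul_eq_mul]
    ring
  -- W cardinalities
  have hWcard0 : (W 0).ncard = d - 1 := by
    have hWeq : W 0 = T.neighborSet (g 0) \ {g 1} := by
      rw [hW]
      congr 1
      ext z
      simp
    rw [hWeq]
    have hsub : ({g 1} : Set V) ⊆ T.neighborSet (g 0) :=
      Set.singleton_subset_iff.mpr (hadjg 0 (by omega))
    rw [Set.ncard_diff hsub (Set.finite_singleton _), hreg, Set.ncard_singleton]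
  have hWcardm : ∀ m, 1 ≤ m → m < n → (W m).ncard = d - 2 := by
    intro m hm1 hmlt
    have hWeq : W m = T.neighborSet (g m) \ {g (m + 1), g (m - 1)} := by
      rw [hW]
      congr 1
      ext z
      simp [hm1]
    rw [hWeq]
    have hadjm : T.Adj (g m) (g (m - 1)) := by
      have h := hadjg (m - 1) (by omega)
      have hmm : m - 1 + 1 = m := by omega
      rw [hmm] at h
      exact h.symm
    have hsub : ({g (m + 1), g (m - 1)} : Set V) ⊆ T.neighborSet (g m) := by
      rw [Set.insert_subset_iff]
      exact ⟨hadjg m hmlt, Set.singleton_subset_iff.mpr hadjm⟩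
    have hne : g (m + 1) ≠ g (m - 1) := by
      intro heq
      have h1 : T.dist o (g (m + 1)) = m + 1 := (hdist (m + 1) (by omega)).1
      have h2 : T.dist o (g (m - 1)) = m - 1 := (hdist (m - 1) (by omega)).1
      rw [heq] at h1
      omega
    rw [Set.ncard_diff hsub ((Set.finite_singleton _).insert _), hreg, Set.ncard_pair hne]
  -- assemble
  have hCdisj : ∀ m1 ∈ Set.Iio n, ∀ m2 ∈ Set.Iio n, m1 ≠ m2 → Disjoint (C m1) (C m2) := by
    intro m1 hm1 m2 hm2 h12
    rw [Set.disjoint_left]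
    intro y hy1 hy2
    simp only [hC, Set.mem_iUnion, exists_prop] at hy1 hy2
    obtain ⟨w1, hw1, hyB1⟩ := hy1
    obtain ⟨w2, hw2, hyB2⟩ := hy2
    have e1 := (hkey m1 hm1 w1 hw1 y hyB1).2
    have e2 := (hkey m2 hm2 w2 hw2 y hyB2).2
    simp only [Set.mem_Iio] at hm1 hm2
    omega
  have hxnot : x ∉ ⋃ m ∈ Set.Iio n, C m := by
    simp only [Set.mem_iUnion, Set.mem_Iio, exists_prop, not_exists, not_and]
    intro m hm hx'
    simp only [hC, Set.mem_iUnion, exists_prop] at hx'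
    obtain ⟨w, hwW, hxB⟩ := hx'
    have := (hkey m hm w hwW x hxB).2
    rw [SimpleGraph.dist_self] at this
    omega
  have hUfin : (⋃ m ∈ Set.Iio n, C m).Finite :=
    Set.Finite.biUnion (Set.finite_Iio n) (fun m _ => hCfin m)
  rw [hDecomp, finsum_mem_insert _ hxnot hUfin,
    SphereSumAux.finsum_mem_biUnion_eq (Set.Iio n) (Set.finite_Iio n) C _
      (fun m _ => hCfin m) hCdisj]
  rw [SimpleGraph.dist_self, pow_zero]
  rw [finsum_mem_congr rfl (fun m hm => hCsum m (Set.mem_Iio.mp hm))]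
  have hcoe : (Set.Iio n : Set ℕ) = ↑(Finset.range n) := by
    ext i; simp
  rw [hcoe, finsum_mem_coe_finset]
  have hsplit : Finset.range n = insert 0 (Finset.Icc 1 (n - 1)) := by
    ext i
    simp only [Finset.mem_range, Finset.mem_insert, Finset.mem_Icc]
    omega
  rw [hsplit, Finset.sum_insert (by simp)]
  have h0term : ((W 0).ncard : ℝ) * (((d - 1) ^ (n - 0 - 1) : ℕ) : ℝ) * θ ^ (2 * (n - 0))
      = ((d : ℝ) - 1) ^ n * θ ^ (2 * n) := by
    rw [hWcard0]
    simp only [Nat.sub_zero]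
    push_cast [Nat.cast_sub (by omega : 1 ≤ d)]
    have hnn : n - 1 + 1 = n := by omega
    rw [← pow_succ', hnn]
  have hmterm : ∀ m ∈ Finset.Icc 1 (n - 1),
      ((W m).ncard : ℝ) * (((d - 1) ^ (n - m - 1) : ℕ) : ℝ) * θ ^ (2 * (n - m))
      = ((d : ℝ) - 2) * ((d : ℝ) - 1) ^ ((n - m) - 1) * θ ^ (2 * (n - m)) := by
    intro m hm
    simp only [Finset.mem_Icc] at hm
    rw [hWcardm m hm.1 (by omega)]
    push_cast [Nat.cast_sub (by omega : 1 ≤ d), Nat.cast_sub (by omega : 2 ≤ d)]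
    ring
  rw [Finset.sum_congr rfl hmterm, h0term]
  have hreindex : ∑ m ∈ Finset.Icc 1 (n - 1),
      ((d : ℝ) - 2) * ((d : ℝ) - 1) ^ ((n - m) - 1) * θ ^ (2 * (n - m))
      = ∑ k ∈ Finset.Icc 1 (n - 1),
      ((d : ℝ) - 2) * ((d : ℝ) - 1) ^ (k - 1) * θ ^ (2 * k) := by
    apply Finset.sum_nbij' (fun m => n - m) (fun k => n - k)
    · intro a ha; simp only [Finset.mem_Icc] at *; omega
    · intro a ha; simp only [Finset.mem_Icc] at *; omega
    · intro a ha; simp only [Finset.mem_Icc] at *; omega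
    · intro a ha; simp only [Finset.mem_Icc] at *; omega
    · intro a ha; rfl
  rw [hreindex]
  ring
end
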